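/- arXiv:2105.13821 — 7 statements merged into one kernel-verified Lean document; each statement's English description precedes it below -/
import Mathlib

section
/- There is no function a : Fin 3 → Fin 3 → ℤ taking values in {−1, 1} such that the product of each row equals 1, the products of the first and second columns equal 1, and the product of the third column equals −1. (The total product computed by rows is +1 while computed by columns it is −1, a contradiction; this is the Kochen–Specker-type parity obstruction underlying the Peres–Mermin square.) -/
/-- The Kochen–Specker-type parity obstruction underlying the Peres–Mermin
square: there is no ±1-valued assignment to the nine cells such that every
row product and the first two column products equal 1 while the third column
product equals −1. -/
theorem peres_mermin_parity_obstruction :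
    ¬ ∃ a : Fin 3 → Fin 3 → ℤ,
      (∀ i j : Fin 3, a i j = 1 ∨ a i j = -1) ∧
      (∀ i : Fin 3, a i 0 * a i 1 * a i 2 = 1) ∧
      (a 0 0 * a 1 0 * a 2 0 = 1) ∧
      (a 0 1 * a 1 1 * a 2 1 = 1) ∧
      (a 0 2 * a 1 2 * a 2 2 = -1) := by
  rintro ⟨a, hv, hr, c0, c1, c2⟩
  have h0 := hr 0
  have h1 := hr 1
  have h2 := hr 2
  have : (a 0 0 * a 0 1 * a 0 2) * (a 1 0 * a 1 1 * a 1 2) * (a 2 0 * a 2 1 * a 2 2)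
      = (a 0 0 * a 1 0 * a 2 0) * (a 0 1 * a 1 1 * a 2 1) * (a 0 2 * a 1 2 * a 2 2) := by
    ring
  rw [h0, h1, h2, c0, c1, c2] at this
  norm_num at this
end

section
/- In the quantum Peres–Mermin square, the product of the three matrices in each row equals the 4×4 identity, the products of the three matrices in the first and second columns equal the 4×4 identity, and the product of the three matrices in the third column equals minus the 4×4 identity: A i 0 * A i 1 * A i 2 = 1 for i = 0,1,2, A 0 j * A 1 j * A 2 j = 1 for j = 0,1, and A 0 2 * A 1 2 * A 2 2 = −1. -/
open Matrix Kronecker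

/-- The Pauli matrix σx. -/
def σx : Matrix (Fin 2) (Fin 2) ℂ := !![0, 1; 1, 0]
/-- The Pauli matrix σy. -/
def σy : Matrix (Fin 2) (Fin 2) ℂ := !![0, -Complex.I; Complex.I, 0]
/-- The Pauli matrix σz. -/
def σz : Matrix (Fin 2) (Fin 2) ℂ := !![1, 0; 0, -1]

/-- Kronecker product of two 2×2 matrices, reindexed as a 4×4 matrix. -/
def kron (M N : Matrix (Fin 2) (Fin 2) ℂ) : Matrix (Fin 4) (Fin 4) ℂ :=
  Matrix.reindex finProdFinEquiv finProdFinEquiv (M ⊗ₖ N)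

/-- The Peres–Mermin table of two-qubit observables. -/
def PM : Fin 3 → Fin 3 → Matrix (Fin 4) (Fin 4) ℂ :=
  ![![kron σx 1, kron 1 σx, kron σx σx],
    ![kron 1 σz, kron σz 1, kron σz σz],
    ![kron σx σz, kron σz σx, kron σy σy]]

lemma kron_eq (M N : Matrix (Fin 2) (Fin 2) ℂ) :
    kron M N = !![M 0 0 * N 0 0, M 0 0 * N 0 1, M 0 1 * N 0 0, M 0 1 * N 0 1;
                  M 0 0 * N 1 0, M 0 0 * N 1 1, M 0 1 * N 1 0, M 0 1 * N 1 1;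
                  M 1 0 * N 0 0, M 1 0 * N 0 1, M 1 1 * N 0 0, M 1 1 * N 0 1;
                  M 1 0 * N 1 0, M 1 0 * N 1 1, M 1 1 * N 1 0, M 1 1 * N 1 1] := by
  ext i j
  fin_cases i <;> fin_cases j <;>
    simp [kron, Matrix.kroneckerMap_apply, finProdFinEquiv] <;> rfl

lemma PM00 : PM 0 0 = !![0,0,1,0;0,0,0,1;1,0,0,0;0,1,0,0] := by
  show kron σx 1 = _
  rw [kron_eq]; norm_num [σx, Matrix.one_apply]
lemma PM01 : PM 0 1 = !![0,1,0,0;1,0,0,0;0,0,0,1;0,0,1,0] := by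
  show kron 1 σx = _
  rw [kron_eq]; norm_num [σx, Matrix.one_apply]
lemma PM02 : PM 0 2 = !![0,0,0,1;0,0,1,0;0,1,0,0;1,0,0,0] := by
  show kron σx σx = _
  rw [kron_eq]; norm_num [σx]
lemma PM10 : PM 1 0 = !![1,0,0,0;0,-1,0,0;0,0,1,0;0,0,0,-1] := by
  show kron 1 σz = _
  rw [kron_eq]; norm_num [σz, Matrix.one_apply]
lemma PM11 : PM 1 1 = !![1,0,0,0;0,1,0,0;0,0,-1,0;0,0,0,-1] := by
  show kron σz 1 = _
  rw [kron_eq]; norm_num [σz, Matrix.one_apply]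
lemma PM12 : PM 1 2 = !![1,0,0,0;0,-1,0,0;0,0,-1,0;0,0,0,1] := by
  show kron σz σz = _
  rw [kron_eq]; norm_num [σz]
lemma PM20 : PM 2 0 = !![0,0,1,0;0,0,0,-1;1,0,0,0;0,-1,0,0] := by
  show kron σx σz = _
  rw [kron_eq]; norm_num [σx, σz]
lemma PM21 : PM 2 1 = !![0,1,0,0;1,0,0,0;0,0,0,-1;0,0,-1,0] := by
  show kron σz σx = _
  rw [kron_eq]; norm_num [σx, σz]
lemma PM22 : PM 2 2 = !![0,0,0,-1;0,0,1,0;0,1,0,0;-1,0,0,0] := by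
  show kron σy σy = _
  rw [kron_eq]; norm_num [σy, Complex.I_mul_I]

set_option maxHeartbeats 1000000 in
/-- In the quantum Peres–Mermin square, each row product and the first two
column products equal the identity, while the third column product equals
minus the identity. -/
theorem peres_mermin_products :
    (∀ i : Fin 3, PM i 0 * PM i 1 * PM i 2 = 1) ∧
    (PM 0 0 * PM 1 0 * PM 2 0 = 1) ∧
    (PM 0 1 * PM 1 1 * PM 2 1 = 1) ∧
    (PM 0 2 * PM 1 2 * PM 2 2 = -1) := by
  refine ⟨fun i => ?_, ?_, ?_, ?_⟩
  · fin_cases i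
    · show PM 0 0 * PM 0 1 * PM 0 2 = 1
      rw [PM00, PM01, PM02]
      ext a b
      fin_cases a <;> fin_cases b <;>
        simp [Matrix.mul_apply, Fin.sum_univ_four, Matrix.one_apply, Matrix.vecHead, Matrix.vecTail, Fin.ext_iff]
    · show PM 1 0 * PM 1 1 * PM 1 2 = 1
      rw [PM10, PM11, PM12]
      ext a b
      fin_cases a <;> fin_cases b <;>
        simp [Matrix.mul_apply, Fin.sum_univ_four, Matrix.one_apply, Matrix.vecHead, Matrix.vecTail, Fin.ext_iff]
    · show PM 2 0 * PM 2 1 * PM 2 2 = 1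
      rw [PM20, PM21, PM22]
      ext a b
      fin_cases a <;> fin_cases b <;>
        simp [Matrix.mul_apply, Fin.sum_univ_four, Matrix.one_apply, Matrix.vecHead, Matrix.vecTail, Fin.ext_iff]
  · rw [PM00, PM10, PM20]
    ext a b
    fin_cases a <;> fin_cases b <;>
      simp [Matrix.mul_apply, Fin.sum_univ_four, Matrix.one_apply, Matrix.vecHead, Matrix.vecTail, Fin.ext_iff]
  · rw [PM01, PM11, PM21]
    ext a b
    fin_cases a <;> fin_cases b <;>
      simp [Matrix.mul_apply, Fin.sum_univ_four, Matrix.one_apply, Matrix.vecHead, Matrix.vecTail, Fin.ext_iff]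
  · rw [PM02, PM12, PM22]
    ext a b
    fin_cases a <;> fin_cases b <;>
      simp [Matrix.mul_apply, Fin.sum_univ_four, Matrix.one_apply,
        Matrix.neg_apply, Matrix.vecHead, Matrix.vecTail, Fin.ext_iff]
end

section
/- For every two-qubit density matrix ρ (a positive semidefinite 4×4 complex matrix with trace 1), the quantum value of the Peres–Mermin expression equals 6, independently of the state: Tr(ρ * (A 0 0 * A 0 1 * A 0 2 + A 1 0 * A 1 1 * A 1 2 + A 2 0 * A 2 1 * A 2 2 + A 0 0 * A 1 0 * A 2 0 + A 0 1 * A 1 1 * A 2 1 − A 0 2 * A 1 2 * A 2 2)) = 6. -/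
open Matrix Kronecker
open scoped ComplexOrder

lemma k_x_one : kron σx 1 = !![0, 0, 1, 0; 0, 0, 0, 1; 1, 0, 0, 0; 0, 1, 0, 0] := by
  ext i j
  fin_cases i <;> fin_cases j <;>
    norm_num [kron, σx, σy, σz, Matrix.one_apply, finProdFinEquiv, Fin.divNat, Fin.modNat]

lemma k_one_x : kron 1 σx = !![0, 1, 0, 0; 1, 0, 0, 0; 0, 0, 0, 1; 0, 0, 1, 0] := by
  ext i j
  fin_cases i <;> fin_cases j <;>
    norm_num [kron, σx, σy, σz, Matrix.one_apply, finProdFinEquiv, Fin.divNat, Fin.modNat]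

lemma k_x_x : kron σx σx = !![0, 0, 0, 1; 0, 0, 1, 0; 0, 1, 0, 0; 1, 0, 0, 0] := by
  ext i j
  fin_cases i <;> fin_cases j <;>
    norm_num [kron, σx, σy, σz, Matrix.one_apply, finProdFinEquiv, Fin.divNat, Fin.modNat]

lemma k_one_z : kron 1 σz = !![1, 0, 0, 0; 0, -1, 0, 0; 0, 0, 1, 0; 0, 0, 0, -1] := by
  ext i j
  fin_cases i <;> fin_cases j <;>
    norm_num [kron, σx, σy, σz, Matrix.one_apply, finProdFinEquiv, Fin.divNat, Fin.modNat]

lemma k_z_one : kron σz 1 = !![1, 0, 0, 0; 0, 1, 0, 0; 0, 0, -1, 0; 0, 0, 0, -1] := by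
  ext i j
  fin_cases i <;> fin_cases j <;>
    norm_num [kron, σx, σy, σz, Matrix.one_apply, finProdFinEquiv, Fin.divNat, Fin.modNat]

lemma k_z_z : kron σz σz = !![1, 0, 0, 0; 0, -1, 0, 0; 0, 0, -1, 0; 0, 0, 0, 1] := by
  ext i j
  fin_cases i <;> fin_cases j <;>
    norm_num [kron, σx, σy, σz, Matrix.one_apply, finProdFinEquiv, Fin.divNat, Fin.modNat]

lemma k_x_z : kron σx σz = !![0, 0, 1, 0; 0, 0, 0, -1; 1, 0, 0, 0; 0, -1, 0, 0] := by
  ext i j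
  fin_cases i <;> fin_cases j <;>
    norm_num [kron, σx, σy, σz, Matrix.one_apply, finProdFinEquiv, Fin.divNat, Fin.modNat]

lemma k_z_x : kron σz σx = !![0, 1, 0, 0; 1, 0, 0, 0; 0, 0, 0, -1; 0, 0, -1, 0] := by
  ext i j
  fin_cases i <;> fin_cases j <;>
    norm_num [kron, σx, σy, σz, Matrix.one_apply, finProdFinEquiv, Fin.divNat, Fin.modNat]

lemma k_y_y : kron σy σy = !![0, 0, 0, -1; 0, 0, 1, 0; 0, 1, 0, 0; -1, 0, 0, 0] := by
  ext i j
  fin_cases i <;> fin_cases j <;>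
    norm_num [kron, σx, σy, σz, Matrix.one_apply, finProdFinEquiv, Fin.divNat, Fin.modNat]

lemma r0 : (!![0, 0, 1, 0; 0, 0, 0, 1; 1, 0, 0, 0; 0, 1, 0, 0] * !![0, 1, 0, 0; 1, 0, 0, 0; 0, 0, 0, 1; 0, 0, 1, 0] * !![0, 0, 0, 1; 0, 0, 1, 0; 0, 1, 0, 0; 1, 0, 0, 0] : Matrix (Fin 4) (Fin 4) ℂ) = !![1, 0, 0, 0; 0, 1, 0, 0; 0, 0, 1, 0; 0, 0, 0, 1] := by
  ext i j
  fin_cases i <;> fin_cases j <;>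
    norm_num [Matrix.mul_apply, Fin.sum_univ_four, Matrix.vecHead, Matrix.vecTail, Matrix.cons_val_two, Matrix.cons_val_three]

lemma r1 : (!![1, 0, 0, 0; 0, -1, 0, 0; 0, 0, 1, 0; 0, 0, 0, -1] * !![1, 0, 0, 0; 0, 1, 0, 0; 0, 0, -1, 0; 0, 0, 0, -1] * !![1, 0, 0, 0; 0, -1, 0, 0; 0, 0, -1, 0; 0, 0, 0, 1] : Matrix (Fin 4) (Fin 4) ℂ) = !![1, 0, 0, 0; 0, 1, 0, 0; 0, 0, 1, 0; 0, 0, 0, 1] := by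
  ext i j
  fin_cases i <;> fin_cases j <;>
    norm_num [Matrix.mul_apply, Fin.sum_univ_four, Matrix.vecHead, Matrix.vecTail, Matrix.cons_val_two, Matrix.cons_val_three]

lemma r2 : (!![0, 0, 1, 0; 0, 0, 0, -1; 1, 0, 0, 0; 0, -1, 0, 0] * !![0, 1, 0, 0; 1, 0, 0, 0; 0, 0, 0, -1; 0, 0, -1, 0] * !![0, 0, 0, -1; 0, 0, 1, 0; 0, 1, 0, 0; -1, 0, 0, 0] : Matrix (Fin 4) (Fin 4) ℂ) = !![1, 0, 0, 0; 0, 1, 0, 0; 0, 0, 1, 0; 0, 0, 0, 1] := by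
  ext i j
  fin_cases i <;> fin_cases j <;>
    norm_num [Matrix.mul_apply, Fin.sum_univ_four, Matrix.vecHead, Matrix.vecTail, Matrix.cons_val_two, Matrix.cons_val_three]

lemma c0 : (!![0, 0, 1, 0; 0, 0, 0, 1; 1, 0, 0, 0; 0, 1, 0, 0] * !![1, 0, 0, 0; 0, -1, 0, 0; 0, 0, 1, 0; 0, 0, 0, -1] * !![0, 0, 1, 0; 0, 0, 0, -1; 1, 0, 0, 0; 0, -1, 0, 0] : Matrix (Fin 4) (Fin 4) ℂ) = !![1, 0, 0, 0; 0, 1, 0, 0; 0, 0, 1, 0; 0, 0, 0, 1] := by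
  ext i j
  fin_cases i <;> fin_cases j <;>
    norm_num [Matrix.mul_apply, Fin.sum_univ_four, Matrix.vecHead, Matrix.vecTail, Matrix.cons_val_two, Matrix.cons_val_three]

lemma c1 : (!![0, 1, 0, 0; 1, 0, 0, 0; 0, 0, 0, 1; 0, 0, 1, 0] * !![1, 0, 0, 0; 0, 1, 0, 0; 0, 0, -1, 0; 0, 0, 0, -1] * !![0, 1, 0, 0; 1, 0, 0, 0; 0, 0, 0, -1; 0, 0, -1, 0] : Matrix (Fin 4) (Fin 4) ℂ) = !![1, 0, 0, 0; 0, 1, 0, 0; 0, 0, 1, 0; 0, 0, 0, 1] := by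
  ext i j
  fin_cases i <;> fin_cases j <;>
    norm_num [Matrix.mul_apply, Fin.sum_univ_four, Matrix.vecHead, Matrix.vecTail, Matrix.cons_val_two, Matrix.cons_val_three]

lemma c2 : (!![0, 0, 0, 1; 0, 0, 1, 0; 0, 1, 0, 0; 1, 0, 0, 0] * !![1, 0, 0, 0; 0, -1, 0, 0; 0, 0, -1, 0; 0, 0, 0, 1] * !![0, 0, 0, -1; 0, 0, 1, 0; 0, 1, 0, 0; -1, 0, 0, 0] : Matrix (Fin 4) (Fin 4) ℂ) = !![-1, 0, 0, 0; 0, -1, 0, 0; 0, 0, -1, 0; 0, 0, 0, -1] := by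
  ext i j
  fin_cases i <;> fin_cases j <;>
    norm_num [Matrix.mul_apply, Fin.sum_univ_four, Matrix.vecHead, Matrix.vecTail, Matrix.cons_val_two, Matrix.cons_val_three]

lemma pm_eval :
    (PM 0 0 * PM 0 1 * PM 0 2 + PM 1 0 * PM 1 1 * PM 1 2
        + PM 2 0 * PM 2 1 * PM 2 2 + PM 0 0 * PM 1 0 * PM 2 0
        + PM 0 1 * PM 1 1 * PM 2 1 - PM 0 2 * PM 1 2 * PM 2 2)
      = (6 : ℂ) • (1 : Matrix (Fin 4) (Fin 4) ℂ) := by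
  show (kron σx 1 * kron 1 σx * kron σx σx + kron 1 σz * kron σz 1 * kron σz σz
      + kron σx σz * kron σz σx * kron σy σy + kron σx 1 * kron 1 σz * kron σx σz
      + kron 1 σx * kron σz 1 * kron σz σx - kron σx σx * kron σz σz * kron σy σy)
      = (6 : ℂ) • (1 : Matrix (Fin 4) (Fin 4) ℂ)
  rw [k_x_one, k_one_x, k_x_x, k_one_z, k_z_one, k_z_z, k_x_z, k_z_x, k_y_y,
    r0, r1, r2, c0, c1, c2]
  ext i j
  fin_cases i <;> fin_cases j <;>
    simp [Matrix.one_apply] <;> norm_num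

/-- State-independence of the quantum Peres–Mermin value: for every two-qubit
density matrix ρ, the expectation of the Peres–Mermin expression equals 6. -/
theorem peres_mermin_quantum_value (ρ : Matrix (Fin 4) (Fin 4) ℂ)
    (hρ : ρ.PosSemidef) (htr : ρ.trace = 1) :
    (ρ * (PM 0 0 * PM 0 1 * PM 0 2 + PM 1 0 * PM 1 1 * PM 1 2
        + PM 2 0 * PM 2 1 * PM 2 2 + PM 0 0 * PM 1 0 * PM 2 0
        + PM 0 1 * PM 1 1 * PM 2 1 - PM 0 2 * PM 1 2 * PM 2 2)).trace = 6 := by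
  rw [pm_eval]
  rw [Matrix.mul_smul, Matrix.mul_one, Matrix.trace_smul, htr]
  simp
end

section
/- For every function a : ZMod 5 → ℤ taking values in {−1, 1}, the KCBS cyclic correlation sum satisfies ∑_{i ∈ ZMod 5} a i * a (i+1) ≥ −3. This is the noncontextual hidden-variable bound of the KCBS inequality. -/
/-- The noncontextual hidden-variable bound of the KCBS inequality: for any
±1-valued assignment to the five cyclically indexed observables, the cyclic
correlation sum is at least −3. -/
theorem kcbs_noncontextual_bound
    (a : ZMod 5 → ℤ) (ha : ∀ i, a i = 1 ∨ a i = -1) :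
    -3 ≤ ∑ i : ZMod 5, a i * a (i + 1) := by
  have h : ∑ i : ZMod 5, a i * a (i + 1) =
      a 0 * a 1 + a 1 * a 2 + a 2 * a 3 + a 3 * a 4 + a 4 * a 0 := by
    rw [show (Finset.univ : Finset (ZMod 5)) = {0,1,2,3,4} from by decide]
    rw [show ({0,1,2,3,4} : Finset (ZMod 5)) =
      insert 0 (insert 1 (insert 2 (insert 3 {4}))) from rfl]
    rw [Finset.sum_insert (by decide), Finset.sum_insert (by decide),
      Finset.sum_insert (by decide), Finset.sum_insert (by decide), Finset.sum_singleton]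
    norm_num [show ((5:ZMod 5)) = 0 from by decide, show ((0:ZMod 5)+1) = 1 from by decide,
      show ((1:ZMod 5)+1) = 2 from by decide, show ((2:ZMod 5)+1) = 3 from by decide,
      show ((3:ZMod 5)+1) = 4 from by decide]
    rw [show ((5:ZMod 5)) = 0 from by decide]
    ring
  rw [h]
  rcases ha 0 with h0 | h0 <;> rcases ha 1 with h1 | h1 <;> rcases ha 2 with h2 | h2 <;>
    rcases ha 3 with h3 | h3 <;> rcases ha 4 with h4 | h4 <;>
    rw [h0, h1, h2, h3, h4] <;> norm_num
end

section
/- The KCBS vectors v_j are unit vectors in ℝ³, adjacent vectors are orthogonal (⟨v_j, v_{j+1}⟩ = 0 for every j ∈ ZMod 5), and the sum of the squared overlaps with e₃ = (0,0,1) equals √5: ∑_{j ∈ ZMod 5} ⟨e₃, v_j⟩² = 5·cos(π/5)/(1 + cos(π/5)) = √5. -/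
open Real

lemma kcbs_cpos : (0:ℝ) < cos (π/5) := by
  rw [cos_pi_div_five]; positivity

/-- The polar angle θ ∈ [0, π/2] of the KCBS vectors, determined by
cos²θ = cos(π/5)/(1 + cos(π/5)). -/
noncomputable def kcbsθ : ℝ := arccos (Real.sqrt (cos (π / 5) / (1 + cos (π / 5))))

/-- The KCBS vectors in ℝ³. -/
noncomputable def kcbsV (j : ZMod 5) : Fin 3 → ℝ :=
  ![sin kcbsθ * cos (4 * π * (j.val : ℝ) / 5),
    sin kcbsθ * sin (4 * π * (j.val : ℝ) / 5),
    cos kcbsθ]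

/-- The Euclidean inner product on ℝ³. -/
def dot3 (u v : Fin 3 → ℝ) : ℝ := ∑ k : Fin 3, u k * v k

/-- The third standard basis vector e₃ = (0,0,1). -/
def e3 : Fin 3 → ℝ := ![0, 0, 1]

lemma cos_kcbs_sq : cos kcbsθ ^ 2 = cos (π/5) / (1 + cos (π/5)) := by
  have hc5 := kcbs_cpos
  have h0 : (0:ℝ) ≤ cos (π/5) / (1 + cos (π/5)) :=
    div_nonneg hc5.le (by linarith)
  have h1 : cos (π/5) / (1 + cos (π/5)) ≤ 1 := by
    rw [div_le_one (by linarith)]; linarith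
  rw [kcbsθ, Real.cos_arccos (by linarith [Real.sqrt_nonneg (cos (π/5) / (1 + cos (π/5)))])
    (Real.sqrt_le_one.mpr h1)]
  exact Real.sq_sqrt h0

lemma sin_kcbs_sq : sin kcbsθ ^ 2 = 1 / (1 + cos (π/5)) := by
  have h := sin_sq_add_cos_sq kcbsθ
  rw [cos_kcbs_sq] at h
  have hpos : (0:ℝ) < 1 + cos (π/5) := by have := kcbs_cpos; linarith
  field_simp at h ⊢
  linarith

lemma kcbs_adj_cos (j : ZMod 5) :
    cos (4 * π * (j.val : ℝ) / 5 - 4 * π * ((j+1).val : ℝ) / 5) = - cos (π/5) := by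
  have hA : cos (4*π/5) = -cos (π/5) := by
    rw [show (4*π/5 : ℝ) = π - π/5 by ring, cos_pi_sub]
  have hneg : cos (-(4*π/5) : ℝ) = -cos (π/5) := by rw [cos_neg, hA]
  have h16 : cos (16*π/5 : ℝ) = -cos (π/5) := by
    rw [show (16*π/5 : ℝ) = -(4*π/5) + (2:ℤ) * (2*π) by push_cast; ring,
      Real.cos_add_int_mul_two_pi, cos_neg, hA]
  have hb : (j+1).val = (j.val + 1) % 5 := by
    rw [ZMod.val_add, show (1 : ZMod 5).val = 1 from rfl]
  have hlt : j.val < 5 := ZMod.val_lt j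
  rw [hb]
  generalize j.val = n at hlt ⊢
  interval_cases n
  · convert hneg using 2; norm_num
  · convert hneg using 2; norm_num; ring
  · convert hneg using 2; norm_num; ring
  · convert hneg using 2; norm_num; ring
  · convert h16 using 2; norm_num; ring

/-- The KCBS vectors are unit vectors, adjacent vectors are orthogonal, and
the sum of squared overlaps with e₃ equals 5·cos(π/5)/(1 + cos(π/5)) = √5. -/
theorem kcbs_vectors :
    (∀ j : ZMod 5, dot3 (kcbsV j) (kcbsV j) = 1) ∧
    (∀ j : ZMod 5, dot3 (kcbsV j) (kcbsV (j + 1)) = 0) ∧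
    (∑ j : ZMod 5, (dot3 e3 (kcbsV j)) ^ 2 = 5 * cos (π / 5) / (1 + cos (π / 5))) ∧
    (5 * cos (π / 5) / (1 + cos (π / 5)) = Real.sqrt 5) := by
  have hpos : (0:ℝ) < 1 + cos (π/5) := by have := kcbs_cpos; linarith
  have key : ∀ a b : ℝ, dot3 (![sin kcbsθ * cos a, sin kcbsθ * sin a, cos kcbsθ])
      (![sin kcbsθ * cos b, sin kcbsθ * sin b, cos kcbsθ])
      = sin kcbsθ ^ 2 * cos (a - b) + cos kcbsθ ^ 2 := by
    intro a b
    simp only [dot3, Fin.sum_univ_three, Matrix.cons_val_zero, Matrix.cons_val_one,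
      Matrix.head_cons, Matrix.cons_val_two, Matrix.tail_cons, Real.cos_sub]
    ring
  refine ⟨?_, ?_, ?_, ?_⟩
  · intro j
    rw [kcbsV, key]
    simp [sin_sq_add_cos_sq]
  · intro j
    rw [kcbsV, kcbsV, key, sin_kcbs_sq, cos_kcbs_sq, kcbs_adj_cos]
    field_simp
    ring
  · have he : ∀ j : ZMod 5, dot3 e3 (kcbsV j) ^ 2 = cos kcbsθ ^ 2 := by
      intro j; simp [dot3, e3, kcbsV, Fin.sum_univ_three]
    simp only [he, Finset.sum_const, Finset.card_univ]
    rw [cos_kcbs_sq]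
    simp only [ZMod.card, nsmul_eq_mul, Nat.cast_ofNat]
    ring
  · rw [cos_pi_div_five]
    have h5 : Real.sqrt 5 ^ 2 = 5 := Real.sq_sqrt (by norm_num)
    have h5p : (0:ℝ) < Real.sqrt 5 := Real.sqrt_pos.mpr (by norm_num)
    rw [div_eq_iff (by nlinarith)]
    nlinarith
end

section
/- Let G be a finite simple graph with vertex set V and let a : V → ℤ take values in {0, 1}. Then ∑_{i ∈ V} a i − ∑_{{i,j} ∈ E(G)} a i * a j ≤ α(G), where α(G) is the independence number of G and the second sum ranges over the edges of G. (This is the deterministic hidden-variable bound for Cabello's two-point-correlation form S = ∑_i P(1|i) − ∑_{(i,j)∈E} P(1,1|i,j) of any noncontextuality inequality.) -/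
/-- A set of vertices is independent if no two of its elements are adjacent. -/
def IsIndepSet {V : Type*} (G : SimpleGraph V) (s : Set V) : Prop :=
  s.Pairwise fun a b => ¬ G.Adj a b

/-- The independence number of a finite simple graph: the maximum cardinality
of a set of pairwise non-adjacent vertices. -/
noncomputable def indepNum {V : Type*} [Fintype V] (G : SimpleGraph V) : ℕ :=
  sSup {n | ∃ s : Finset V, IsIndepSet G ↑s ∧ s.card = n}

lemma indepNum_bddAbove {V : Type*} [Fintype V] (G : SimpleGraph V) :
    BddAbove {n | ∃ s : Finset V, IsIndepSet G ↑s ∧ s.card = n} := by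
  refine ⟨Fintype.card V, fun n hn => ?_⟩
  obtain ⟨s, _, rfl⟩ := hn
  exact Finset.card_le_card (Finset.subset_univ s)

lemma key_lemma {V : Type*} [Fintype V] [DecidableEq V]
    (G : SimpleGraph V) [DecidableRel G.Adj] (s : Finset V) :
    (s.card : ℤ) - ((G.edgeFinset.filter (fun e => ∀ v ∈ e, v ∈ s)).card : ℤ)
      ≤ (indepNum G : ℤ) := by
  induction s using Finset.strongInduction with
  | _ s ih =>
    by_cases h : IsIndepSet G ↑s
    · have h1 : s.card ≤ indepNum G := le_csSup (indepNum_bddAbove G) ⟨s, h, rfl⟩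
      have h2 : (0 : ℤ) ≤ ((G.edgeFinset.filter (fun e => ∀ v ∈ e, v ∈ s)).card : ℤ) :=
        Int.natCast_nonneg _
      have h3 := Int.ofNat_le.mpr h1
      push_cast at h3 ⊢
      linarith
    · unfold IsIndepSet Set.Pairwise at h
      push_neg at h
      obtain ⟨i, hi, j, hj, hij, hadj⟩ := h
      simp only [Finset.mem_coe] at hi hj
      set s' := s.erase i with hs'
      have hsub : s' ⊂ s := Finset.erase_ssubset hi
      have ihs := ih s' hsub
      have hcard : s'.card + 1 = s.card := Finset.card_erase_add_one hi
      -- the edge {i,j}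
      have he : s(i, j) ∈ G.edgeFinset.filter (fun e => ∀ v ∈ e, v ∈ s) := by
        rw [Finset.mem_filter]
        refine ⟨SimpleGraph.mem_edgeFinset.mpr hadj, ?_⟩
        intro v hv
        rw [Sym2.mem_iff] at hv
        rcases hv with rfl | rfl
        · exact hi
        · exact hj
      have hne : s(i, j) ∉ G.edgeFinset.filter (fun e => ∀ v ∈ e, v ∈ s') := by
        rw [Finset.mem_filter]
        rintro ⟨-, hall⟩
        have := hall i (Sym2.mem_mk_left i j)
        exact (Finset.notMem_erase i s) this
      have hsubf : G.edgeFinset.filter (fun e => ∀ v ∈ e, v ∈ s')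
          ⊆ G.edgeFinset.filter (fun e => ∀ v ∈ e, v ∈ s) := by
        intro e he
        rw [Finset.mem_filter] at he ⊢
        exact ⟨he.1, fun v hv => Finset.mem_of_mem_erase (he.2 v hv)⟩
      have hlt : (G.edgeFinset.filter (fun e => ∀ v ∈ e, v ∈ s')).card
          < (G.edgeFinset.filter (fun e => ∀ v ∈ e, v ∈ s)).card :=
        Finset.card_lt_card ((Finset.ssubset_iff_of_subset hsubf).mpr ⟨_, he, hne⟩)
      have h1 : ((G.edgeFinset.filter (fun e => ∀ v ∈ e, v ∈ s')).card : ℤ) + 1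
          ≤ ((G.edgeFinset.filter (fun e => ∀ v ∈ e, v ∈ s)).card : ℤ) := by
        exact_mod_cast hlt
      have h2 : (s'.card : ℤ) + 1 = (s.card : ℤ) := by exact_mod_cast hcard
      linarith

/-- Deterministic hidden-variable bound for Cabello's two-point-correlation
form of a noncontextuality inequality: for any {0,1}-valued assignment `a`,
∑_i a i − ∑_{{i,j} ∈ E(G)} a i · a j ≤ α(G). -/
theorem cabello_two_point_bound {V : Type*} [Fintype V] [DecidableEq V]
    (G : SimpleGraph V) [DecidableRel G.Adj]
    (a : V → ℤ) (ha : ∀ i, a i = 0 ∨ a i = 1) :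
    (∑ i : V, a i)
      - ∑ e ∈ G.edgeFinset,
          Sym2.lift ⟨fun i j => a i * a j, fun i j => mul_comm (a i) (a j)⟩ e
      ≤ (indepNum G : ℤ) := by
  set S : Finset V := Finset.univ.filter (fun i => a i = 1) with hS
  have hsum : (∑ i : V, a i) = (S.card : ℤ) := by
    rw [hS, Finset.card_filter]
    push_cast
    apply Finset.sum_congr rfl
    intro i _
    rcases ha i with h | h <;> simp [h]
  have hedge : ∑ e ∈ G.edgeFinset,
      Sym2.lift ⟨fun i j => a i * a j, fun i j => mul_comm (a i) (a j)⟩ e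
      = ((G.edgeFinset.filter (fun e => ∀ v ∈ e, v ∈ S)).card : ℤ) := by
    rw [Finset.card_filter]
    push_cast
    apply Finset.sum_congr rfl
    intro e _
    induction e using Sym2.ind with
    | _ i j =>
      simp only [Sym2.lift_mk]
      have hmem : (∀ v ∈ s(i, j), v ∈ S) ↔ (a i = 1 ∧ a j = 1) := by
        simp [Sym2.mem_iff, hS, forall_eq_or_imp]
      rcases ha i with h1 | h1 <;> rcases ha j with h2 | h2 <;>
        simp [h1, h2, hS, Finset.mem_filter]
  rw [hsum, hedge]
  exact key_lemma G S
end

section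
/- Let η ∈ ℝ with 0 ≤ η. All eight matrices G(x₁,x₂,x₃) = (1/8)·(I + η·(x₁ σx + x₂ σy + x₃ σz)), for (x₁,x₂,x₃) ∈ {−1,1}³, are positive semidefinite if and only if η ≤ 1/√3. (This is the joint-measurability threshold for the three unsharp Pauli observables E(x_i) = (1/2)(I + η x_i σ_i): they admit a mother POVM precisely when η ∈ [0, 1/√3].) -/
open Matrix
open scoped ComplexOrder

/-- The candidate mother POVM element
G(x₁,x₂,x₃) = (1/8)(I + η(x₁σx + x₂σy + x₃σz)). -/
noncomputable def motherG (η : ℝ) (x₁ x₂ x₃ : ℤ) : Matrix (Fin 2) (Fin 2) ℂ :=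
  ((8 : ℂ)⁻¹) • (1 + (η : ℂ) • ((x₁ : ℂ) • σx + (x₂ : ℂ) • σy + (x₃ : ℂ) • σz))

lemma quadform (η : ℝ) (s₁ s₂ s₃ : ℤ) (v : Fin 2 → ℂ) :
    star v ⬝ᵥ (motherG η s₁ s₂ s₃) *ᵥ v =
      Complex.ofReal ((8:ℝ)⁻¹ * (((v 0).re^2 + (v 0).im^2 + (v 1).re^2 + (v 1).im^2)
        + η * ((s₁:ℝ) * (2*((v 0).re*(v 1).re + (v 0).im*(v 1).im))
             + (s₂:ℝ) * (2*((v 0).re*(v 1).im - (v 0).im*(v 1).re))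
             + (s₃:ℝ) * ((v 0).re^2 + (v 0).im^2 - (v 1).re^2 - (v 1).im^2)))) := by
  apply Complex.ext <;>
    simp [motherG, σx, σy, σz, Matrix.mulVec, dotProduct, Fin.sum_univ_two,
      Matrix.one_apply, ← Complex.ofReal_pow, Complex.add_re, Complex.add_im, Complex.mul_re, Complex.mul_im] <;> ring

lemma T2 (a b c e₁ e₂ e₃ : ℝ) (h₁ : e₁^2 = 1) (h₂ : e₂^2 = 1) (h₃ : e₃^2 = 1) :
    (e₁*a + e₂*b + e₃*c)^2 ≤ 3*(a^2+b^2+c^2) := by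
  nlinarith [sq_nonneg (e₁*a - e₂*b), sq_nonneg (e₁*a - e₃*c), sq_nonneg (e₂*b - e₃*c),
    sq_nonneg (e₁*a), sq_nonneg (e₂*b), sq_nonneg (e₃*c)]

lemma key (η N T : ℝ) (hη : 0 ≤ η) (h3 : Real.sqrt 3 * η ≤ 1) (hN : 0 ≤ N)
    (hT : T^2 ≤ 3*N^2) : 0 ≤ N + η*T := by
  have habs : |T| ≤ Real.sqrt 3 * N := by
    have h1 : Real.sqrt (T^2) ≤ Real.sqrt (3*N^2) := Real.sqrt_le_sqrt hT
    rwa [Real.sqrt_sq_eq_abs, Real.sqrt_mul (by norm_num : (0:ℝ) ≤ 3),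
      Real.sqrt_sq hN] at h1
  nlinarith [mul_le_mul_of_nonneg_left habs hη, mul_le_mul_of_nonneg_right h3 hN,
    neg_abs_le T, mul_le_mul_of_nonneg_left (neg_abs_le T) hη]

lemma herm (η : ℝ) (s₁ s₂ s₃ : ℤ) : (motherG η s₁ s₂ s₃).IsHermitian := by
  ext i j
  fin_cases i <;> fin_cases j <;>
    simp [motherG, σx, σy, σz, Matrix.conjTranspose_apply, Matrix.one_apply,
      Complex.ext_iff] <;> ring

/-- Joint-measurability threshold for the three unsharp Pauli observables:
for 0 ≤ η, all eight mother POVM elements G(x₁,x₂,x₃), (x₁,x₂,x₃) ∈ {±1}³,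
are positive semidefinite iff η ≤ 1/√3. -/
theorem mother_povm_positive_iff (η : ℝ) (hη : 0 ≤ η) :
    (∀ x₁ x₂ x₃ : ℤ, (x₁ = -1 ∨ x₁ = 1) → (x₂ = -1 ∨ x₂ = 1) →
        (x₃ = -1 ∨ x₃ = 1) → (motherG η x₁ x₂ x₃).PosSemidef)
      ↔ η ≤ 1 / Real.sqrt 3 := by
  have h3pos : (0:ℝ) < Real.sqrt 3 := Real.sqrt_pos.mpr (by norm_num)
  have hsq : Real.sqrt 3 ^ 2 = 3 := Real.sq_sqrt (by norm_num)
  constructor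
  · intro h
    have hp := (h 1 1 1 (Or.inr rfl) (Or.inr rfl) (Or.inr rfl)).dotProduct_mulVec_nonneg
      ![(-1 : ℂ) + Complex.I, ((1 + Real.sqrt 3 : ℝ) : ℂ)]
    rw [quadform] at hp
    rw [Complex.zero_le_real] at hp
    simp at hp
    rw [le_div_iff₀ h3pos]
    nlinarith [hp, Real.sqrt_nonneg 3]
  · intro hle x₁ x₂ x₃ h₁ h₂ h₃
    have h3 : Real.sqrt 3 * η ≤ 1 := by
      rw [le_div_iff₀ h3pos] at hle; linarith
    refine Matrix.PosSemidef.of_dotProduct_mulVec_nonneg (herm η x₁ x₂ x₃) (fun v => ?_)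
    rw [quadform, Complex.zero_le_real]
    set p := (v 0).re; set q := (v 0).im; set r := (v 1).re; set s := (v 1).im
    have hN : (0:ℝ) ≤ p^2+q^2+r^2+s^2 := by positivity
    have hs₁ : ((x₁:ℝ))^2 = 1 := by rcases h₁ with h | h <;> simp [h]
    have hs₂ : ((x₂:ℝ))^2 = 1 := by rcases h₂ with h | h <;> simp [h]
    have hs₃ : ((x₃:ℝ))^2 = 1 := by rcases h₃ with h | h <;> simp [h]
    have hT : ((x₁:ℝ) * (2*(p*r + q*s)) + (x₂:ℝ) * (2*(p*s - q*r))
        + (x₃:ℝ) * (p^2+q^2-r^2-s^2))^2 ≤ 3*(p^2+q^2+r^2+s^2)^2 := by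
      have := T2 (2*(p*r+q*s)) (2*(p*s-q*r)) (p^2+q^2-r^2-s^2) (x₁:ℝ) (x₂:ℝ) (x₃:ℝ)
        hs₁ hs₂ hs₃
      have hid : (2*(p*r+q*s))^2 + (2*(p*s-q*r))^2 + (p^2+q^2-r^2-s^2)^2
          = (p^2+q^2+r^2+s^2)^2 := by ring
      nlinarith [this]
    have := key η (p^2+q^2+r^2+s^2) _ hη h3 hN hT
    positivity
end
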